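/- Let S ⊂ ℂ be a finite set, let P_{2n} ∈ 𝒫_{2n}(S) be polynomials with all coefficients in S, and suppose H is a polynomial of minimal degree m such that sup_n NC(P_{2n}H) < ∞. Then every zero of H is simple. -/

import Mathlib

open Polynomial

section Aux
open Finset

lemma gap_periodic (A Hp : Polynomial ℂ) (T : Finset ℂ)
    (hA : ∀ j, A.coeff j ∈ T)
    (m : ℕ) (hm : Hp.natDegree = m) (hm1 : 1 ≤ m) (h0 : Hp.coeff 0 ≠ 0)
    (K p : ℕ) (hK : K = T.card ^ m) (hp : p = Nat.factorial K)
    (b : ℕ) (hb : m ≤ b)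
    (hz : ∀ j', b ≤ j' → j' ≤ b + p + K → (A * Hp).coeff j' = 0) :
    A.coeff (b + K) = A.coeff (b + p + K) := by
  -- convolution formula
  have conv : ∀ t, m ≤ t →
      (A * Hp).coeff t = ∑ k ∈ Finset.range (m+1), Hp.coeff k * A.coeff (t - k) := by
    intro t ht
    rw [mul_comm, Polynomial.coeff_mul, Finset.Nat.sum_antidiagonal_eq_sum_range_succ_mk]
    symm
    apply Finset.sum_subset
    · exact Finset.range_subset_range.mpr (by omega)
    · intro k hk hk'
      simp only [Finset.mem_range] at hk hk'
      rw [Polynomial.coeff_eq_zero_of_natDegree_lt (by omega : Hp.natDegree < k), zero_mul]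
  set φ : (Fin m → ℂ) → ℂ :=
    fun v => -(Hp.coeff 0)⁻¹ * ∑ i : Fin m, Hp.coeff (i.1+1) * v i with hφ
  have trans : ∀ t, m ≤ t → (A * Hp).coeff t = 0 →
      A.coeff t = φ (fun i => A.coeff (t - 1 - i.1)) := by
    intro t ht hzt
    have h1 := (conv t ht).symm.trans hzt
    rw [Finset.sum_range_succ'] at h1
    simp only [Nat.sub_zero] at h1
    have h2 : ∑ i : Fin m, Hp.coeff (i.1+1) * A.coeff (t - 1 - i.1)
        = ∑ k ∈ Finset.range m, Hp.coeff (k+1) * A.coeff (t - (k+1)) := by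
      rw [← Fin.sum_univ_eq_sum_range (fun k => Hp.coeff (k+1) * A.coeff (t - (k+1))) m]
      refine Finset.sum_congr rfl fun i _ => ?_
      congr 2
      omega
    rw [hφ]
    simp only []
    rw [h2]
    have hs : Hp.coeff 0 * A.coeff t
        = -∑ k ∈ Finset.range m, Hp.coeff (k+1) * A.coeff (t - (k+1)) := by
      linear_combination h1
    calc A.coeff t = (Hp.coeff 0)⁻¹ * (Hp.coeff 0 * A.coeff t) := by field_simp
      _ = -(Hp.coeff 0)⁻¹ * ∑ k ∈ Finset.range m, Hp.coeff (k+1) * A.coeff (t - (k+1)) := by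
          rw [hs]; ring
  set W : ℕ → Fin m → ℂ := fun t i => A.coeff (t - i.1) with hW
  set Φ : (Fin m → ℂ) → Fin m → ℂ :=
    fun v i => if h : i.1 = 0 then φ v else v ⟨i.1 - 1, by omega⟩ with hΦ
  have step : ∀ t, m ≤ t → (A * Hp).coeff t = 0 → W t = Φ (W (t-1)) := by
    intro t ht hzt
    funext i
    by_cases hi : i.1 = 0
    · simp only [hW, hΦ, hi, dif_pos]
      have := trans t ht hzt
      simpa [hi] using this
    · simp only [hW, hΦ, hi, dif_neg]
      congr 1
      omega
  -- membership in finite window space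
  classical
  have hmem : ∀ t, W t ∈ Fintype.piFinset (fun _ : Fin m => T) := by
    intro t
    rw [Fintype.mem_piFinset]
    intro i
    exact hA _
  have hcard : (Fintype.piFinset (fun _ : Fin m => T)).card = K := by
    rw [Fintype.card_piFinset]
    simp [hK]
  -- pigeonhole among the K+1 windows W b, ..., W (b+K)
  obtain ⟨x, -, y, -, hxy, hWxy⟩ :=
    Finset.exists_ne_map_eq_of_card_lt_of_maps_to
      (s := (Finset.univ : Finset (Fin (K+1))))
      (by rw [hcard, Finset.card_univ, Fintype.card_fin]; omega)
      (fun x _ => hmem (b + x.1))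
  obtain ⟨u, v, huv, hvK, hWe⟩ : ∃ u v : ℕ, u < v ∧ v ≤ K ∧ W (b + u) = W (b + v) := by
    rcases lt_trichotomy x.1 y.1 with h | h | h
    · exact ⟨x.1, y.1, h, by omega, hWxy⟩
    · exact absurd (Fin.ext h) hxy
    · exact ⟨y.1, x.1, h, by omega, hWxy.symm⟩
  set q := v - u with hq
  have hq1 : 1 ≤ q := by omega
  have hqK : q ≤ K := by omega
  have hWq : W (b + u) = W (b + u + q) := by
    rw [show b + u + q = b + v by omega]
    exact hWe
  -- propagation of the coincidence along the gap
  have prop : ∀ s, b + u + q + s ≤ b + p + K → W (b + u + q + s) = W (b + u + s) := by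
    intro s
    induction s with
    | zero => intro _; exact hWq.symm
    | succ s ih =>
      intro hle
      have e1 : W (b + u + q + (s+1)) = Φ (W (b + u + q + s)) := by
        have := step (b + u + q + s + 1) (by omega)
          (hz _ (by omega) (by omega))
        rw [show b + u + q + s + 1 - 1 = b + u + q + s by omega] at this
        rw [show b + u + q + (s+1) = b + u + q + s + 1 by omega]
        exact this
      have e2 : W (b + u + (s+1)) = Φ (W (b + u + s)) := by
        have := step (b + u + s + 1) (by omega)
          (hz _ (by omega) (by omega))
        rw [show b + u + s + 1 - 1 = b + u + s by omega] at this
        rw [show b + u + (s+1) = b + u + s + 1 by omega]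
        exact this
      rw [e1, ih (by omega), ← e2]
  -- iterate over multiples of q up to p
  have hdvd : q ∣ p := hp ▸ Nat.dvd_factorial hq1 hqK
  obtain ⟨c, hc⟩ := hdvd
  have mult : ∀ i, i * q ≤ p → W (b + K + i * q) = W (b + K) := by
    intro i
    induction i with
    | zero => intro _; norm_num
    | succ i ih =>
      intro hle
      have hsm : (i + 1) * q = i * q + q := by ring
      rw [hsm] at hle ⊢
      have hiq : i * q ≤ p := by omega
      have h1 : b + K + (i * q + q) = b + u + q + (K - u + i * q) := by omega
      have h2 : b + u + (K - u + i * q) = b + K + i * q := by omega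
      rw [h1, prop (K - u + i * q) (by omega), h2, ih hiq]
  have hfinal : W (b + K + p) = W (b + K) := by
    have hcq : c * q = p := by rw [hc]; ring
    have := mult c (le_of_eq hcq)
    rwa [hcq] at this
  have := congrFun hfinal ⟨0, by omega⟩
  simp only [hW] at this
  rw [show b + K + p - 0 = b + p + K by omega, show b + K - 0 = b + K by omega] at this
  exact this.symm


lemma support_X_mul' (Q : Polynomial ℂ) :
    (X * Q).support = Q.support.map ⟨Nat.succ, Nat.succ_injective⟩ := by
  ext k
  cases k with
  | zero =>
    simp [Polynomial.mem_support_iff, Polynomial.mul_coeff_zero, Polynomial.coeff_X_zero]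
  | succ n =>
    simp [Polynomial.mem_support_iff, Polynomial.coeff_X_mul, Nat.succ_eq_add_one]

lemma support_bound (A Hp : Polynomial ℂ) (T : Finset ℂ)
    (hA : ∀ j, A.coeff j ∈ T)
    (m : ℕ) (hm : Hp.natDegree = m) (hm1 : 1 ≤ m) (h0 : Hp.coeff 0 ≠ 0)
    (K p : ℕ) (hK : K = T.card ^ m) (hp : p = Nat.factorial K)
    (C : ℕ) (hC : (A * Hp).support.card ≤ C) :
    (A * ((X : Polynomial ℂ)^p - 1)).support.card ≤ (m + p + K) + C * (p + K + 1) := by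
  classical
  have hsub : (A * ((X : Polynomial ℂ)^p - 1)).support ⊆
      Finset.range (m + p + K) ∪
        (A * Hp).support.biUnion (fun j' => Finset.Icc j' (j' + (p + K))) := by
    intro j hj
    rw [Polynomial.mem_support_iff] at hj
    by_cases hjs : j < m + p + K
    · exact Finset.mem_union_left _ (Finset.mem_range.mpr hjs)
    · push_neg at hjs
      refine Finset.mem_union_right _ ?_
      by_contra hnot
      simp only [Finset.mem_biUnion, Finset.mem_Icc, not_exists, not_and] at hnot
      -- all coefficients of A * Hp vanish on [j - (p+K), j]
      have hz : ∀ j', (j - (p + K)) ≤ j' → j' ≤ (j - (p + K)) + p + K →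
          (A * Hp).coeff j' = 0 := by
        intro j' h1 h2
        by_contra hne
        have hmem : j' ∈ (A * Hp).support := Polynomial.mem_support_iff.mpr hne
        have := hnot j' hmem
        omega
      have hper := gap_periodic A Hp T hA m hm hm1 h0 K p hK hp (j - (p + K))
        (by omega) hz
      apply hj
      have hco : (A * ((X : Polynomial ℂ)^p - 1)).coeff j
          = A.coeff (j - p) - A.coeff j := by
        rw [mul_sub, mul_one, Polynomial.coeff_sub, Polynomial.coeff_mul_X_pow',
          if_pos (by omega : p ≤ j)]
      rw [show j - (p + K) + K = j - p by omega,
        show j - (p + K) + p + K = j by omega] at hper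
      rw [hco, hper, sub_self]
  calc (A * ((X : Polynomial ℂ)^p - 1)).support.card
      ≤ (Finset.range (m + p + K) ∪
          (A * Hp).support.biUnion (fun j' => Finset.Icc j' (j' + (p + K)))).card :=
        Finset.card_le_card hsub
    _ ≤ (Finset.range (m + p + K)).card +
          ((A * Hp).support.biUnion (fun j' => Finset.Icc j' (j' + (p + K)))).card :=
        Finset.card_union_le _ _
    _ ≤ (m + p + K) + ∑ j' ∈ (A * Hp).support, (Finset.Icc j' (j' + (p + K))).card := by
        rw [Finset.card_range]
        exact Nat.add_le_add_left (Finset.card_biUnion_le) _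
    _ ≤ (m + p + K) + C * (p + K + 1) := by
        refine Nat.add_le_add_left ?_ _
        have : ∀ j' : ℕ, (Finset.Icc j' (j' + (p + K))).card = p + K + 1 := by
          intro j'; rw [Nat.card_Icc]; omega
        calc ∑ j' ∈ (A * Hp).support, (Finset.Icc j' (j' + (p + K))).card
            = (A * Hp).support.card * (p + K + 1) := by
              rw [Finset.sum_congr rfl (fun x _ => this x), Finset.sum_const, smul_eq_mul]
          _ ≤ C * (p + K + 1) := Nat.mul_le_mul_right _ hC

end Aux

/-- If `H` is a polynomial of minimal degree with `sup_n NC(P_{2n} H) < ∞`, where the `P_{2n}`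
have all coefficients in a finite set `S ⊂ ℂ`, then every zero of `H` is simple. -/
theorem minimal_H_zeros_are_simple (S : Set ℂ) (hS : S.Finite)
    (P : ℕ → Polynomial ℂ)
    (hdeg : ∀ n, (P n).natDegree ≤ 2 * n)
    (hcoeff : ∀ n, ∀ j ≤ 2 * n, (P n).coeff j ∈ S)
    (H : Polynomial ℂ) (hH : H ≠ 0)
    (hfin : ∃ C : ℕ, ∀ n, (P n * H).support.card ≤ C)
    (hmin : ∀ G : Polynomial ℂ, G ≠ 0 → G.natDegree < H.natDegree →
      ¬ ∃ C : ℕ, ∀ n, (P n * G).support.card ≤ C) :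
    ∀ z : ℂ, H.rootMultiplicity z ≤ 1 := by
  classical
  intro z
  by_cases hm0 : H.natDegree = 0
  · -- constant polynomial: no roots
    have hCc : H = Polynomial.C (H.coeff 0) := Polynomial.eq_C_of_natDegree_eq_zero hm0
    have hc0 : H.coeff 0 ≠ 0 := fun h => hH (by rw [hCc, h, map_zero])
    have : ¬ H.IsRoot z := by
      rw [Polynomial.IsRoot, hCc, Polynomial.eval_C]
      exact hc0
    rw [Polynomial.rootMultiplicity_eq_zero this]
    omega
  have hm1 : 1 ≤ H.natDegree := by omega
  obtain ⟨C, hC⟩ := hfin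
  -- Step 1: H.coeff 0 ≠ 0
  have h0 : H.coeff 0 ≠ 0 := by
    intro h0
    have hXdvd : H = X * H.divX := by
      conv_lhs => rw [← Polynomial.X_mul_divX_add H]
      rw [h0, map_zero, add_zero]
    have hd0 : H.divX ≠ 0 := fun h => hH (by rw [hXdvd, h, mul_zero])
    refine hmin H.divX hd0 ?_ ⟨C, fun n => ?_⟩
    · rw [Polynomial.natDegree_divX_eq_natDegree_tsub_one]; omega
    · have heq : P n * H = X * (P n * H.divX) := by
        conv_lhs => rw [hXdvd]
        ring
      have := hC n
      rw [heq, support_X_mul', Finset.card_map] at this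
      exact this
  -- the finite coefficient set
  set T : Finset ℂ := insert 0 hS.toFinset with hT
  have hA : ∀ n j, (P n).coeff j ∈ T := by
    intro n j
    by_cases hj : j ≤ 2 * n
    · exact Finset.mem_insert_of_mem ((Set.Finite.mem_toFinset hS).mpr (hcoeff n j hj))
    · rw [Polynomial.coeff_eq_zero_of_natDegree_lt (by have := hdeg n; omega)]
      exact Finset.mem_insert_self _ _
  set m : ℕ := H.natDegree with hmdef
  set K : ℕ := T.card ^ m with hKdef
  set p : ℕ := Nat.factorial K with hpdef
  have hp0 : 0 < p := Nat.factorial_pos K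
  -- bounded number of terms of P n * (X^p - 1)
  have hbound : ∀ n, (P n * ((X : Polynomial ℂ)^p - 1)).support.card ≤
      (m + p + K) + C * (p + K + 1) := fun n =>
    support_bound (P n) H T (hA n) m rfl hm1 h0 K p rfl rfl C (hC n)
  -- divide X^p - 1 by (the monic normalization of) H
  have hlc : H.leadingCoeff⁻¹ ≠ 0 :=
    inv_ne_zero (Polynomial.leadingCoeff_ne_zero.mpr hH)
  set M : Polynomial ℂ := H * Polynomial.C H.leadingCoeff⁻¹ with hM
  have hMonic : M.Monic := Polynomial.monic_mul_leadingCoeff_inv hH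
  set R : Polynomial ℂ := ((X : Polynomial ℂ)^p - 1) %ₘ M with hR
  set Q : Polynomial ℂ := ((X : Polynomial ℂ)^p - 1) /ₘ M with hQ
  have key : R + M * Q = (X : Polynomial ℂ)^p - 1 :=
    Polynomial.modByMonic_add_div _ M
  by_cases hR0 : R = 0
  · -- H divides X^p - 1, which is squarefree
    have hdvd : H ∣ (X : Polynomial ℂ)^p - 1 := by
      refine ⟨Polynomial.C H.leadingCoeff⁻¹ * Q, ?_⟩
      rw [← key, hR0, zero_add, hM]
      ring
    have hN0 : ((X : Polynomial ℂ)^p - 1) ≠ 0 := by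
      have := Polynomial.X_pow_sub_C_ne_zero hp0 (1 : ℂ)
      rwa [map_one] at this
    have hsq : Squarefree ((X : Polynomial ℂ)^p - 1) := by
      have hcast : ((p : ℕ) : ℂ) ≠ 0 := Nat.cast_ne_zero.mpr (by omega)
      have := (Polynomial.separable_X_pow_sub_C (1 : ℂ) hcast one_ne_zero).squarefree
      rwa [map_one] at this
    have hle : H.rootMultiplicity z ≤ ((X : Polynomial ℂ)^p - 1).rootMultiplicity z :=
      (Polynomial.le_rootMultiplicity_iff hN0).mpr
        ((Polynomial.pow_rootMultiplicity_dvd H z).trans hdvd)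
    have h2 : ((X : Polynomial ℂ)^p - 1).rootMultiplicity z ≤ 1 := by
      by_contra hgt
      push_neg at hgt
      have hdvd2 : (X - Polynomial.C z) * (X - Polynomial.C z) ∣ (X : Polynomial ℂ)^p - 1 := by
        have h3 := Polynomial.pow_rootMultiplicity_dvd ((X : Polynomial ℂ)^p - 1) z
        have : (X - Polynomial.C z) * (X - Polynomial.C z) = (X - Polynomial.C z)^2 :=
          (sq _).symm
        rw [this]
        exact dvd_trans (pow_dvd_pow _ (by omega)) h3
      exact Polynomial.not_isUnit_X_sub_C z (hsq _ hdvd2)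
    omega
  · -- R is a smaller-degree polynomial with bounded number of terms: contradiction
    exfalso
    have hdegR : R.natDegree < H.natDegree := by
      refine Polynomial.natDegree_lt_natDegree hR0 ?_
      have h1 : R.degree < M.degree := Polynomial.degree_modByMonic_lt _ hMonic
      rwa [hM, Polynomial.degree_mul_C hlc] at h1
    refine hmin R hR0 hdegR
      ⟨(m + p + K) + C * (p + K + 1) + C * (Polynomial.C H.leadingCoeff⁻¹ * Q).support.card,
        fun n => ?_⟩
    have hPR : P n * R = P n * ((X : Polynomial ℂ)^p - 1) +
        -((P n * H) * (Polynomial.C H.leadingCoeff⁻¹ * Q)) := by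
      have : R = ((X : Polynomial ℂ)^p - 1) - M * Q := by rw [← key]; ring
      rw [this, hM]
      ring
    rw [hPR]
    calc (P n * ((X : Polynomial ℂ)^p - 1) +
            -((P n * H) * (Polynomial.C H.leadingCoeff⁻¹ * Q))).support.card
        ≤ ((P n * ((X : Polynomial ℂ)^p - 1)).support ∪
            (-((P n * H) * (Polynomial.C H.leadingCoeff⁻¹ * Q))).support).card :=
          Finset.card_le_card Polynomial.support_add
      _ ≤ (P n * ((X : Polynomial ℂ)^p - 1)).support.card +
            (-((P n * H) * (Polynomial.C H.leadingCoeff⁻¹ * Q))).support.card :=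
          Finset.card_union_le _ _
      _ ≤ (m + p + K) + C * (p + K + 1) +
            C * (Polynomial.C H.leadingCoeff⁻¹ * Q).support.card := by
          refine Nat.add_le_add (hbound n) ?_
          rw [Polynomial.support_neg]
          calc ((P n * H) * (Polynomial.C H.leadingCoeff⁻¹ * Q)).support.card
              ≤ (P n * H).support.card * (Polynomial.C H.leadingCoeff⁻¹ * Q).support.card :=
                Polynomial.card_support_mul_le
            _ ≤ C * (Polynomial.C H.leadingCoeff⁻¹ * Q).support.card :=
                Nat.mul_le_mul_right _ (hC n)
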